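/- Every digraph with chromatic number at least (n−1)^2 + 1 contains every oriented path of length n−1. -/

import Mathlib

/-- `ContainsOrientedPath D L σ` : the digraph `D` contains the oriented path with
`L` edges whose `i`-th edge is oriented forward when `σ i = true` and backward
when `σ i = false`. -/
def ContainsOrientedPath {V : Type*} (D : V → V → Prop) (L : ℕ) (σ : ℕ → Bool) : Prop :=
  ∃ x : Fin (L + 1) → V, Function.Injective x ∧
    ∀ i : ℕ, ∀ _ : i < L,
      if σ i then D (x ⟨i, by omega⟩) (x ⟨i + 1, by omega⟩)
      else D (x ⟨i + 1, by omega⟩) (x ⟨i, by omega⟩)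

open SimpleGraph Finset

lemma fromRel_induce' {V : Type*} (D : V → V → Prop) (S : Set V) :
    (SimpleGraph.fromRel D).induce S = SimpleGraph.fromRel (fun a b : S => D a b) := by
  ext a b; simp [Subtype.ext_iff]


lemma fromRel_induce {V : Type*} (D : V → V → Prop) (S : Set V) :
    (SimpleGraph.fromRel D).induce S = SimpleGraph.fromRel (fun a b : S => D a b) := by
  ext a b
  simp [Subtype.ext_iff]

lemma fromRel_flip {V : Type*} (D : V → V → Prop) :
    SimpleGraph.fromRel (fun a b => D b a) = SimpleGraph.fromRel D := by
  ext a b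
  simp [SimpleGraph.fromRel]
  tauto

/-- combine colorings of the two parts of a vertex partition -/
lemma part_colorable {V : Type*} (G : SimpleGraph V) (A : Set V) {a b : ℕ}
    (hA : (G.induce A).Colorable a) (hB : (G.induce Aᶜ).Colorable b) :
    G.Colorable (a + b) := by
  classical
  obtain ⟨CA⟩ := hA
  obtain ⟨CB⟩ := hB
  refine ⟨SimpleGraph.Coloring.mk
    (fun v => if h : v ∈ A then Fin.castAdd b (CA ⟨v, h⟩) else Fin.natAdd a (CB ⟨v, h⟩)) ?_⟩
  intro u w hadj
  by_cases hu : u ∈ A <;> by_cases hw : w ∈ A <;> simp only [hu, hw, dif_pos, dif_neg,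
    not_false_iff]
  · intro hcol
    have : CA ⟨u, hu⟩ ≠ CA ⟨w, hw⟩ := CA.valid (by simpa using hadj)
    exact this (by
      apply Fin.castAdd_injective
      exact hcol)
  · intro hcol
    have h1 : ((Fin.castAdd b (CA ⟨u, hu⟩)) : ℕ) < a := (CA ⟨u, hu⟩).2
    have h2 : a ≤ ((Fin.natAdd a (CB ⟨w, hw⟩)) : ℕ) := by simp
    rw [hcol] at h1; omega
  · intro hcol
    have h1 : ((Fin.castAdd b (CA ⟨w, hw⟩)) : ℕ) < a := (CA ⟨w, hw⟩).2
    have h2 : a ≤ ((Fin.natAdd a (CB ⟨u, hu⟩)) : ℕ) := by simp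
    rw [← hcol] at h1; omega
  · intro hcol
    have : CB ⟨u, hu⟩ ≠ CB ⟨w, hw⟩ := CB.valid (by simpa using hadj)
    exact this (by
      have h := congrArg Fin.val hcol
      simp only [Fin.coe_natAdd] at h
      exact Fin.ext (by omega))


/-- a finite digraph with all out-degrees at most `d` has underlying graph `(2d+1)`-colorable -/
lemma outdeg_colorable : ∀ (N : ℕ) (V : Type u) [Fintype V] (D : V → V → Prop) (d : ℕ),
    Fintype.card V = N →
    (∀ v : V, ({u | D v u ∧ u ≠ v}).ncard ≤ d) →
    (SimpleGraph.fromRel D).Colorable (2 * d + 1) := by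
  intro N
  induction N using Nat.strong_induction_on with
  | _ N IH =>
    intro V _ D d hcard h
    classical
    rcases Nat.eq_zero_or_pos N with h0 | hpos
    · subst h0
      haveI : IsEmpty V := Fintype.card_eq_zero_iff.mp hcard
      exact SimpleGraph.Colorable.of_isEmpty (G := SimpleGraph.fromRel D) _
    -- counting: there is a vertex of undirected degree ≤ 2d
    set G := SimpleGraph.fromRel D with hG
    set f : V → Finset V := fun v => univ.filter (fun u => D v u ∧ u ≠ v) with hf
    set g : V → Finset V := fun v => univ.filter (fun u => D u v ∧ v ≠ u) with hg
    set nbr : V → Finset V := fun v => univ.filter (fun u => G.Adj v u) with hnbr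
    have hDle : ∀ v : V, (f v).card ≤ d := by
      intro v
      have hv := h v
      rwa [show {u | D v u ∧ u ≠ v} = (f v : Set V) by simp [hf], Set.ncard_coe_finset] at hv
    have hsum : ∑ v : V, (g v).card = ∑ v : V, (f v).card := by
      simp only [hf, hg, Finset.card_filter]
      rw [Finset.sum_comm]
    have hnbrsub : ∀ v : V, nbr v ⊆ f v ∪ g v := by
      intro v u hu
      simp only [hnbr, hG, mem_filter, mem_univ, true_and, fromRel_adj] at hu
      simp only [hf, hg, mem_union, mem_filter, mem_univ, true_and]
      rcases hu.2 with h1 | h1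
      · exact Or.inl ⟨h1, (Ne.symm hu.1)⟩
      · exact Or.inr ⟨h1, hu.1⟩
    have hsumnbr : ∑ v : V, (nbr v).card ≤ 2 * d * Fintype.card V := by
      calc ∑ v : V, (nbr v).card ≤ ∑ v : V, ((f v).card + (g v).card) := by
            apply Finset.sum_le_sum
            intro v _
            exact le_trans (Finset.card_le_card (hnbrsub v)) (Finset.card_union_le _ _)
        _ = ∑ v : V, (f v).card + ∑ v : V, (g v).card := Finset.sum_add_distrib
        _ ≤ d * Fintype.card V + d * Fintype.card V := by
            rw [hsum]
            have : ∑ v : V, (f v).card ≤ ∑ _v : V, d := Finset.sum_le_sum (fun v _ => hDle v)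
            simp only [Finset.sum_const, smul_eq_mul, Finset.card_univ, mul_comm] at this ⊢
            omega
        _ = 2 * d * Fintype.card V := by ring
    -- find a vertex of small degree
    have hex : ∃ v : V, (nbr v).card ≤ 2 * d := by
      by_contra hc
      push_neg at hc
      have : ∑ _v : V, (2 * d + 1) ≤ ∑ v : V, (nbr v).card := Finset.sum_le_sum (fun v _ => hc v)
      simp only [Finset.sum_const, smul_eq_mul, Finset.card_univ] at this
      have hVpos : 1 ≤ Fintype.card V := by omega
      nlinarith [hsumnbr]
    obtain ⟨v, hv⟩ := hex
    -- remove v and color the rest by induction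
    haveI : Fintype {u : V // u ≠ v} := Subtype.fintype _
    have hcard' : Fintype.card {u : V // u ≠ v} = N - 1 := by
      rw [Fintype.card_subtype_compl]
      simp [Fintype.card_subtype_eq, hcard]
    set D' : {u : V // u ≠ v} → {u : V // u ≠ v} → Prop := fun a b => D a b with hD'
    have hcolor' : (SimpleGraph.fromRel D').Colorable (2 * d + 1) := by
      apply IH (N - 1) (by omega) _ D' d hcard'
      intro a
      have hsub : Subtype.val '' {u : {u : V // u ≠ v} | D' a u ∧ u ≠ a} ⊆ {u | D (a : V) u ∧ u ≠ (a : V)} := by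
        rintro _ ⟨u, ⟨h1, h2⟩, rfl⟩
        exact ⟨h1, fun hh => h2 (Subtype.ext hh)⟩
      calc {u : {u : V // u ≠ v} | D' a u ∧ u ≠ a}.ncard
          = (Subtype.val '' {u : {u : V // u ≠ v} | D' a u ∧ u ≠ a}).ncard :=
            (Set.ncard_image_of_injective _ Subtype.val_injective).symm
        _ ≤ {u | D (a : V) u ∧ u ≠ (a : V)}.ncard :=
            Set.ncard_le_ncard hsub (Set.toFinite _)
        _ ≤ d := h a
    obtain ⟨C'⟩ := hcolor'
    -- choose a color for v not used by its neighbors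
    set F : V → Fin (2 * d + 1) := fun u => if h : u = v then 0 else C' ⟨u, h⟩ with hF
    have himg : ((nbr v).image F).card < Fintype.card (Fin (2 * d + 1)) := by
      calc ((nbr v).image F).card ≤ (nbr v).card := Finset.card_image_le
        _ ≤ 2 * d := hv
        _ < 2 * d + 1 := by omega
        _ = Fintype.card (Fin (2 * d + 1)) := by simp
    have hex0 : ∃ c0, c0 ∉ (nbr v).image F := by
      by_contra hc
      push_neg at hc
      have heq : (nbr v).image F = univ := Finset.eq_univ_iff_forall.mpr hc
      rw [heq, Finset.card_univ] at himg
      omega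
    obtain ⟨c0, hc0⟩ := hex0
    -- assemble the coloring
    refine ⟨SimpleGraph.Coloring.mk (fun u => if h : u = v then c0 else C' ⟨u, h⟩) ?_⟩
    intro p q hadj
    have hpq : p ≠ q := hadj.ne
    by_cases hp : p = v <;> by_cases hq : q = v
    · exact absurd (hp.trans hq.symm) hpq
    · subst hp
      simp only [dif_pos, dif_neg hq]
      intro hcontr
      apply hc0
      rw [hcontr]
      refine Finset.mem_image.mpr ⟨q, ?_, ?_⟩
      · simp only [hnbr, mem_filter, mem_univ, true_and]; exact hadj
      · simp only [hF, dif_neg hq]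
    · subst hq
      simp only [dif_pos, dif_neg hp]
      intro hcontr
      apply hc0
      rw [← hcontr]
      refine Finset.mem_image.mpr ⟨p, ?_, ?_⟩
      · simp only [hnbr, mem_filter, mem_univ, true_and]; exact hadj.symm
      · simp only [hF, dif_neg hp]
    · simp only [dif_neg hp, dif_neg hq]
      have hadj' : (SimpleGraph.fromRel D').Adj ⟨p, hp⟩ ⟨q, hq⟩ := by
        rw [SimpleGraph.fromRel_adj] at hadj ⊢
        exact ⟨fun hh => hadj.1 (congrArg Subtype.val hh), hadj.2⟩
      exact C'.valid hadj'

lemma burr_main : ∀ (n : ℕ) (V : Type u) [Fintype V] (D : V → V → Prop) (σ : ℕ → Bool),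
    ¬ (SimpleGraph.fromRel D).Colorable (n ^ 2) → ContainsOrientedPath D n σ := by
  intro n
  induction n with
  | zero =>
    intro V _ D σ hnc
    have hne : Nonempty V := by
      by_contra hc
      haveI : IsEmpty V := not_nonempty_iff.mp hc
      exact hnc (SimpleGraph.Colorable.of_isEmpty (G := SimpleGraph.fromRel D) _)
    obtain ⟨v⟩ := hne
    refine ⟨fun _ => v, fun a b _ => ?_, fun i hi => absurd hi (Nat.not_lt_zero i)⟩
    have ha : (a : ℕ) = 0 := by omega
    have hb : (b : ℕ) = 0 := by omega
    exact Fin.ext (ha.trans hb.symm)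
  | succ n IH =>
    intro V _ D σ hnc
    classical
    set E : V → V → Prop := fun p q => if σ n then D p q else D q p with hE
    set A : Set V := {v | n + 1 ≤ ({u | E v u ∧ u ≠ v}).ncard} with hA
    haveI : Fintype ↥A := Fintype.ofFinite _
    haveI : Fintype ↥Aᶜ := Fintype.ofFinite _
    -- the subgraph induced on A is not n²-colorable
    have hAnc : ¬ (SimpleGraph.fromRel (fun a b : ↥A => D a b)).Colorable (n ^ 2) := by
      intro hcol
      apply hnc
      have h1 : ((SimpleGraph.fromRel D).induce A).Colorable (n ^ 2) := by
        rw [fromRel_induce']; exact hcol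
      have h2 : ((SimpleGraph.fromRel D).induce Aᶜ).Colorable (2 * n + 1) := by
        rw [fromRel_induce']
        have heq : SimpleGraph.fromRel (fun a b : ↥Aᶜ => D a b)
            = SimpleGraph.fromRel (fun a b : ↥Aᶜ => E a b) := by
          cases hσ : σ n
          · have : (fun a b : ↥Aᶜ => E (a : V) b) = fun a b : ↥Aᶜ => D (b : V) a := by
              funext a b; simp [hE, hσ]
            rw [this, fromRel_flip]
          · have : (fun a b : ↥Aᶜ => E (a : V) b) = fun a b : ↥Aᶜ => D (a : V) b := by
              funext a b; simp [hE, hσ]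
            rw [this]
        rw [heq]
        apply outdeg_colorable (Fintype.card ↥Aᶜ) _ _ n rfl
        intro v
        have hv : ¬ (n + 1 ≤ ({u | E (v : V) u ∧ u ≠ (v : V)}).ncard) := v.2
        have hsub : Subtype.val '' {u : ↥Aᶜ | E (v : V) u ∧ u ≠ v}
            ⊆ {u | E (v : V) u ∧ u ≠ (v : V)} := by
          rintro _ ⟨u, ⟨h1', h2'⟩, rfl⟩
          exact ⟨h1', fun hh => h2' (Subtype.ext hh)⟩
        calc {u : ↥Aᶜ | E (v : V) u ∧ u ≠ v}.ncard
            = (Subtype.val '' {u : ↥Aᶜ | E (v : V) u ∧ u ≠ v}).ncard :=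
              (Set.ncard_image_of_injective _ Subtype.val_injective).symm
          _ ≤ ({u | E (v : V) u ∧ u ≠ (v : V)}).ncard :=
              Set.ncard_le_ncard hsub (Set.toFinite _)
          _ ≤ n := by omega
      have h3 := part_colorable (SimpleGraph.fromRel D) A h1 h2
      have : n ^ 2 + (2 * n + 1) = (n + 1) ^ 2 := by ring
      rwa [this] at h3
    -- get the path of length n inside A, ending at a vertex of big E-outdegree
    obtain ⟨x, hxinj, hxedge⟩ := IH ↥A (fun a b => D a b) σ hAnc
    set y : ↥A := x ⟨n, by omega⟩ with hy
    have hyA : n + 1 ≤ ({u | E (y : V) u ∧ u ≠ (y : V)}).ncard := y.2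
    set used : Finset V := Finset.univ.image (fun i => ((x i : V))) with hused
    have husedcard : used.card = n + 1 := by
      have hinj2 : Function.Injective (fun i => ((x i : V))) :=
        fun a b hab => hxinj (Subtype.val_injective hab)
      rw [hused, Finset.card_image_of_injective _ hinj2]
      simp
    have hexu : ∃ u : V, (E (y : V) u ∧ u ≠ (y : V)) ∧ u ∉ used := by
      by_contra hc
      push_neg at hc
      have hsub : {u | E (y : V) u ∧ u ≠ (y : V)} ⊆ ↑(used.erase (y : V)) := by
        intro u hu
        simp only [Finset.coe_erase, Set.mem_diff, Set.mem_singleton_iff]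
        exact ⟨hc u hu, hu.2⟩
      have hle := Set.ncard_le_ncard hsub (used.erase (y : V)).finite_toSet
      rw [Set.ncard_coe_finset] at hle
      have hyused : (y : V) ∈ used := by
        rw [hused]
        exact Finset.mem_image_of_mem _ (Finset.mem_univ _)
      have := Finset.card_erase_of_mem hyused
      omega
    obtain ⟨u, ⟨huE, huy⟩, huused⟩ := hexu
    -- extend the path
    refine ⟨fun i => if h : (i : ℕ) < n + 1 then ((x ⟨i, h⟩ : V)) else u, ?_, ?_⟩
    · intro i j hij
      by_cases hi : (i : ℕ) < n + 1 <;> by_cases hj : (j : ℕ) < n + 1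
      · simp only [dif_pos hi, dif_pos hj] at hij
        have h4 := hxinj (Subtype.val_injective hij)
        have h5 : (i : ℕ) = (j : ℕ) := by simpa using h4
        exact Fin.ext h5
      · simp only [dif_pos hi, dif_neg hj] at hij
        have hmem : ((x ⟨i, hi⟩ : V)) ∈ used := Finset.mem_image_of_mem _ (Finset.mem_univ _)
        rw [hij] at hmem
        exact absurd hmem huused
      · simp only [dif_neg hi, dif_pos hj] at hij
        have hmem : ((x ⟨j, hj⟩ : V)) ∈ used := Finset.mem_image_of_mem _ (Finset.mem_univ _)
        rw [← hij] at hmem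
        exact absurd hmem huused
      · have h1 : (i : ℕ) = n + 1 := by omega
        have h2 : (j : ℕ) = n + 1 := by omega
        exact Fin.ext (h1.trans h2.symm)
    · intro i hi
      dsimp only
      by_cases hii : i < n
      · have e1 : (if h : ((⟨i, by omega⟩ : Fin (n + 1 + 1)) : ℕ) < n + 1
            then ((x ⟨i, h⟩ : V)) else u) = ((x ⟨i, by omega⟩ : V)) :=
          dif_pos (show i < n + 1 by omega)
        have e2 : (if h : ((⟨i + 1, by omega⟩ : Fin (n + 1 + 1)) : ℕ) < n + 1
            then ((x ⟨i + 1, h⟩ : V)) else u) = ((x ⟨i + 1, by omega⟩ : V)) :=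
          dif_pos (show i + 1 < n + 1 by omega)
        have hedge := hxedge i hii
        cases hσ : σ i
        · simp only [hσ, if_false, Bool.false_eq_true] at hedge ⊢
          rw [e1, e2]
          exact hedge
        · simp only [hσ, if_true] at hedge ⊢
          rw [e1, e2]
          exact hedge
      · have hieq : i = n := by omega
        subst hieq
        have e1 : (if h : ((⟨i, by omega⟩ : Fin (i + 1 + 1)) : ℕ) < i + 1
            then ((x ⟨i, h⟩ : V)) else u) = (y : V) := by
          rw [dif_pos (show i < i + 1 by omega)]
        have e2 : (if h : ((⟨i + 1, by omega⟩ : Fin (i + 1 + 1)) : ℕ) < i + 1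
            then ((x ⟨i + 1, h⟩ : V)) else u) = u := dif_neg (show ¬ (i + 1 < i + 1) by omega)
        cases hσ : σ i
        · simp only [hσ, if_false, Bool.false_eq_true] at huE ⊢
          rw [e1, e2]
          rw [hE] at huE
          simp only [hσ, if_false, Bool.false_eq_true] at huE
          exact huE
        · simp only [hσ, if_true] at huE ⊢
          rw [e1, e2]
          rw [hE] at huE
          simp only [hσ, if_true] at huE
          exact huE


/-- Burr's theorem: every digraph with chromatic number at least `(n-1)^2 + 1`
contains every oriented path of length `n - 1`. -/
theorem burr_universal {V : Type*} (D : V → V → Prop) (n : ℕ) (hn : 1 ≤ n)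
    (h : (((n - 1) ^ 2 + 1 : ℕ) : ℕ∞) ≤ (SimpleGraph.fromRel D).chromaticNumber)
    (σ : ℕ → Bool) :
    ContainsOrientedPath D (n - 1) σ := by
  classical
  set m := n - 1 with hm
  have hcol : ¬ (SimpleGraph.fromRel D).Colorable (m ^ 2) := by
    intro hc
    have h1 := hc.chromaticNumber_le
    have h2 : ((m ^ 2 + 1 : ℕ) : ℕ∞) ≤ ((m ^ 2 : ℕ) : ℕ∞) := le_trans h h1
    rw [Nat.cast_le] at h2
    omega
  -- compactness: some finite induced subgraph is not colorable
  have hfin : ∃ G' : (SimpleGraph.fromRel D).Subgraph, G'.verts.Finite ∧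
      ¬ Nonempty (G'.coe →g completeGraph (Fin (m ^ 2))) := by
    by_contra hc
    push_neg at hc
    exact hcol (SimpleGraph.nonempty_hom_of_forall_finite_subgraph_hom
      (fun G' hf => (hc G' hf).some))
  obtain ⟨G', hfinv, hnohom⟩ := hfin
  haveI : Fintype ↥G'.verts := hfinv.fintype
  set DS : ↥G'.verts → ↥G'.verts → Prop := fun a b => D a b with hDS
  have hnc : ¬ (SimpleGraph.fromRel DS).Colorable (m ^ 2) := by
    rintro ⟨C⟩
    apply hnohom
    refine ⟨C.comp ⟨fun v => v, ?_⟩⟩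
    intro a b hab
    have h1 : (SimpleGraph.fromRel D).Adj (a : V) b := G'.adj_sub hab
    rw [SimpleGraph.fromRel_adj] at h1 ⊢
    exact ⟨fun hh => h1.1 (congrArg Subtype.val hh), h1.2⟩
  obtain ⟨x, hxinj, hxedge⟩ := burr_main m ↥G'.verts DS σ hnc
  refine ⟨fun i => ((x i : V)), fun a b hab => hxinj (Subtype.val_injective hab), ?_⟩
  intro i hi
  have hedge := hxedge i hi
  cases hσ : σ i
  · simp only [hσ, Bool.false_eq_true, if_false] at hedge ⊢
    exact hedge
  · simp only [hσ, if_true] at hedge ⊢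
    exact hedge
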